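/- A posteriori estimate for the tangential (friction) terms: let (Ω, m) be a measure space and λ_t, λ_t^h, u_t, u_t^h, F ∈ L²(Ω, m) real-valued. Assume |λ_t| ≤ F a.e. and ∫_Ω λ_t u_t dm = ∫_Ω F |u_t| dm. Then ∫_Ω (λ_t − λ_t^h)(u_t^h − u_t) dm ≤ ∫_Ω (|λ_t^h| − F)⁺ |u_t − u_t^h| dm − ∫_Ω (|λ_t^h| − F)⁻ |u_t^h| dm − ∫_Ω λ_t^h u_t^h dm + ∫_Ω |λ_t^h| |u_t^h| dm, where v⁺ = max{v, 0} and v⁻ = min{v, 0}, so that v = v⁺ + v⁻. -/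

import Mathlib

open MeasureTheory

private lemma integrable_mul_of_memL2 {Ω : Type*} [MeasurableSpace Ω] {m : Measure Ω}
    {f g : Ω → ℝ} (hf : MemLp f 2 m) (hg : MemLp g 2 m) :
    Integrable (fun ω => f ω * g ω) m := by
  have h : MemLp (f • g) 1 m := hg.smul hf
  exact memLp_one_iff_integrable.mp h

/-- A posteriori estimate for the tangential (friction) terms: if `|λₜ| ≤ F` a.e. and
`∫ λₜ uₜ dm = ∫ F |uₜ| dm`, then
`∫ (λₜ − λₜʰ)(uₜʰ − uₜ) ≤ ∫ (|λₜʰ| − F)⁺ |uₜ − uₜʰ| − ∫ (|λₜʰ| − F)⁻ |uₜʰ| − ∫ λₜʰ uₜʰ + ∫ |λₜʰ| |uₜʰ|`,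
where `v⁺ = max v 0` and `v⁻ = min v 0`. -/
theorem aposteriori_tangential_friction
    {Ω : Type*} [MeasurableSpace Ω] (m : Measure Ω)
    (lt lth ut uth F : Ω → ℝ)
    (hlt : MemLp lt 2 m) (hlth : MemLp lth 2 m) (hut : MemLp ut 2 m)
    (huth : MemLp uth 2 m) (hF : MemLp F 2 m)
    (hlt_le : ∀ᵐ ω ∂m, |lt ω| ≤ F ω)
    (hcompl : ∫ ω, lt ω * ut ω ∂m = ∫ ω, F ω * |ut ω| ∂m) :
    ∫ ω, (lt ω - lth ω) * (uth ω - ut ω) ∂m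
      ≤ (∫ ω, max (|lth ω| - F ω) 0 * |ut ω - uth ω| ∂m)
        - (∫ ω, min (|lth ω| - F ω) 0 * |uth ω| ∂m)
        - (∫ ω, lth ω * uth ω ∂m)
        + (∫ ω, |lth ω| * |uth ω| ∂m) := by
  -- Memℒp facts for absolute values
  have hlth_abs : MemLp (fun ω => |lth ω|) 2 m := by
    simpa [Real.norm_eq_abs] using hlth.norm
  have hut_abs : MemLp (fun ω => |ut ω|) 2 m := by
    simpa [Real.norm_eq_abs] using hut.norm
  have huth_abs : MemLp (fun ω => |uth ω|) 2 m := by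
    simpa [Real.norm_eq_abs] using huth.norm
  have hd : MemLp (fun ω => |lth ω| - F ω) 2 m := hlth_abs.sub hF
  have hpos : MemLp (fun ω => max (|lth ω| - F ω) 0) 2 m := hd.pos_part
  have hneg : MemLp (fun ω => min (|lth ω| - F ω) 0) 2 m := by
    have : (fun ω => min (|lth ω| - F ω) 0)
        = fun ω => (|lth ω| - F ω) - max (|lth ω| - F ω) 0 := by
      funext ω
      rcases le_total (|lth ω| - F ω) 0 with h | h
      · simp [min_eq_left h, max_eq_right h]
      · simp [min_eq_right h, max_eq_left h]
    rw [this]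
    exact hd.sub hpos
  have hdiff_abs : MemLp (fun ω => |ut ω - uth ω|) 2 m := by
    simpa [Real.norm_eq_abs] using (hut.sub huth).norm
  -- Integrability of all products
  have i1 : Integrable (fun ω => (lt ω - lth ω) * (uth ω - ut ω)) m :=
    integrable_mul_of_memL2 (hlt.sub hlth) (huth.sub hut)
  have i2 : Integrable (fun ω => lt ω * ut ω) m := integrable_mul_of_memL2 hlt hut
  have i3 : Integrable (fun ω => F ω * |ut ω|) m := integrable_mul_of_memL2 hF hut_abs
  have i4 : Integrable (fun ω => max (|lth ω| - F ω) 0 * |ut ω - uth ω|) m :=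
    integrable_mul_of_memL2 hpos hdiff_abs
  have i5 : Integrable (fun ω => min (|lth ω| - F ω) 0 * |uth ω|) m :=
    integrable_mul_of_memL2 hneg huth_abs
  have i6 : Integrable (fun ω => lth ω * uth ω) m := integrable_mul_of_memL2 hlth huth
  have i7 : Integrable (fun ω => |lth ω| * |uth ω|) m :=
    integrable_mul_of_memL2 hlth_abs huth_abs
  -- Pointwise inequality
  set P : Ω → ℝ := fun ω => (lt ω - lth ω) * (uth ω - ut ω) + (lt ω * ut ω - F ω * |ut ω|)
    with hP
  set Q : Ω → ℝ := fun ω => max (|lth ω| - F ω) 0 * |ut ω - uth ω|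
      - min (|lth ω| - F ω) 0 * |uth ω| - lth ω * uth ω + |lth ω| * |uth ω| with hQ
  have hPint : Integrable P m := i1.add (i2.sub i3)
  have hQint : Integrable Q m := ((i4.sub i5).sub i6).add i7
  have hpw : ∀ᵐ ω ∂m, P ω ≤ Q ω := by
    filter_upwards [hlt_le] with ω hω
    have hF0 : 0 ≤ F ω := (abs_nonneg _).trans hω
    have h1 : lt ω * uth ω ≤ F ω * |uth ω| :=
      (le_abs_self _).trans (by rw [abs_mul]; exact mul_le_mul_of_nonneg_right hω (abs_nonneg _))
    have h2 : lth ω * ut ω ≤ |lth ω| * |ut ω| :=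
      (le_abs_self _).trans (abs_mul _ _).le
    have h3 : |ut ω| ≤ |ut ω - uth ω| + |uth ω| := by
      calc |ut ω| = |(ut ω - uth ω) + uth ω| := by ring_nf
        _ ≤ |ut ω - uth ω| + |uth ω| := abs_add_le _ _
    simp only [hP, hQ]
    rcases le_total (|lth ω| - F ω) 0 with h | h
    · rw [max_eq_right h, min_eq_left h]
      nlinarith [abs_nonneg (ut ω), abs_nonneg (uth ω), abs_nonneg (ut ω - uth ω)]
    · rw [max_eq_left h, min_eq_right h]
      nlinarith [abs_nonneg (ut ω), abs_nonneg (uth ω), abs_nonneg (ut ω - uth ω)]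
  have hint : ∫ ω, P ω ∂m ≤ ∫ ω, Q ω ∂m := integral_mono_ae hPint hQint hpw
  have i23 : Integrable (fun ω => lt ω * ut ω - F ω * |ut ω|) m := i2.sub i3
  have i45 : Integrable (fun ω => min (|lth ω| - F ω) 0 * |uth ω|) m := i5
  have i4m5 : Integrable (fun ω => max (|lth ω| - F ω) 0 * |ut ω - uth ω|
      - min (|lth ω| - F ω) 0 * |uth ω|) m := i4.sub i5
  have i4m5m6 : Integrable (fun ω => max (|lth ω| - F ω) 0 * |ut ω - uth ω|
      - min (|lth ω| - F ω) 0 * |uth ω| - lth ω * uth ω) m := i4m5.sub i6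
  have hPeq : ∫ ω, P ω ∂m = ∫ ω, (lt ω - lth ω) * (uth ω - ut ω) ∂m := by
    simp only [hP]
    rw [integral_add i1 i23, integral_sub i2 i3, hcompl]
    ring
  have hQeq : ∫ ω, Q ω ∂m
      = (∫ ω, max (|lth ω| - F ω) 0 * |ut ω - uth ω| ∂m)
        - (∫ ω, min (|lth ω| - F ω) 0 * |uth ω| ∂m)
        - (∫ ω, lth ω * uth ω ∂m)
        + (∫ ω, |lth ω| * |uth ω| ∂m) := by
    simp only [hQ]
    rw [integral_add i4m5m6 i7, integral_sub i4m5 i6, integral_sub i4 i5]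
  rw [hPeq, hQeq] at hint
  exact hint
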